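/- Let N be one of the integers 2, 3, 4, 5, 6, 7, 8, 9, 10, 12, 13, 16, 18, 25. Then there exists a unique family of integers (r_δ), indexed by the positive divisors δ of N, satisfying: (a) ∑_{δ∣N} r_δ·δ = −24; (b) ∑_{δ∣N} r_δ·(N/δ) = 24; (c) ∑_{δ∣N} r_δ = 0; and (e) for every divisor d of N other than 1 and N, ∑_{δ∣N} r_δ·gcd(δ, d)²·(N/δ)·(N/d)·gcd(d, N/d) = 0. Moreover, this unique family additionally satisfies (d): ∏_{δ∣N} (N/δ)^{r_δ} is the square of a rational number. -/

import Mathlib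

set_option maxHeartbeats 1600000


/-- Conditions (a), (b), (c), (e) on the exponent family `r` of an eta product
`∏_{δ ∣ N} η(δτ)^{r_δ}` forcing it to be a Hauptmodul of `X₀(N)`. -/
def HauptmodulExponents (N : ℕ) (r : ℕ → ℤ) : Prop :=
  (∀ δ, δ ∉ N.divisors → r δ = 0) ∧
  (∑ δ ∈ N.divisors, r δ * (δ : ℤ) = -24) ∧
  (∑ δ ∈ N.divisors, r δ * ((N / δ : ℕ) : ℤ) = 24) ∧
  (∑ δ ∈ N.divisors, r δ = 0) ∧
  (∀ d ∈ N.divisors, d ≠ 1 → d ≠ N →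
    ∑ δ ∈ N.divisors,
      r δ * (Nat.gcd δ d : ℤ) ^ 2 * ((N / δ : ℕ) : ℤ) * ((N / d : ℕ) : ℤ) *
        (Nat.gcd d (N / d) : ℤ) = 0)

private def hmR2 : ℕ → ℤ := fun δ => if δ = 1 then 24 else if δ = 2 then -24 else 0

private lemma hmAux2 : (∃! r : ℕ → ℤ, HauptmodulExponents 2 r) ∧
    (∀ r : ℕ → ℤ, HauptmodulExponents 2 r →
      ∃ q : ℚ, ∏ δ ∈ (2:ℕ).divisors, (((2:ℕ) : ℚ) / (δ : ℚ)) ^ (r δ) = q ^ 2) := by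
  have hdiv : (2:ℕ).divisors = {1, 2} := by decide
  have huniq : ∀ r : ℕ → ℤ, HauptmodulExponents 2 r → r = hmR2 := by
    intro r hr
    obtain ⟨hz, ha, hb, hc, he⟩ := hr
    rw [hdiv] at ha hb hc
    simp [Finset.sum_insert, Finset.mem_insert] at ha hb hc
    funext δ
    by_cases h1 : δ = 1
    · subst h1; simp [hmR2]; omega
    by_cases h2 : δ = 2
    · subst h2; simp [hmR2]; omega
    · have hδ : δ ∉ (2:ℕ).divisors := by rw [hdiv]; simp [h1, h2]
      rw [hz δ hδ]; simp [hmR2, h1, h2]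
  refine ⟨⟨hmR2, ⟨?_, by decide⟩, huniq⟩, ?_⟩
  · intro δ hδ
    rw [hdiv] at hδ
    simp at hδ
    simp [hmR2, hδ.1, hδ.2]
  · intro r hr
    rw [huniq r hr]
    refine ⟨4096, ?_⟩
    rw [hdiv]
    simp [Finset.prod_insert, Finset.mem_insert, hmR2]
    norm_num

private def hmR3 : ℕ → ℤ := fun δ => if δ = 1 then 12 else if δ = 3 then -12 else 0

private lemma hmAux3 : (∃! r : ℕ → ℤ, HauptmodulExponents 3 r) ∧
    (∀ r : ℕ → ℤ, HauptmodulExponents 3 r →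
      ∃ q : ℚ, ∏ δ ∈ (3:ℕ).divisors, (((3:ℕ) : ℚ) / (δ : ℚ)) ^ (r δ) = q ^ 2) := by
  have hdiv : (3:ℕ).divisors = {1, 3} := by decide
  have huniq : ∀ r : ℕ → ℤ, HauptmodulExponents 3 r → r = hmR3 := by
    intro r hr
    obtain ⟨hz, ha, hb, hc, he⟩ := hr
    rw [hdiv] at ha hb hc
    simp [Finset.sum_insert, Finset.mem_insert] at ha hb hc
    funext δ
    by_cases h1 : δ = 1
    · subst h1; simp [hmR3]; omega
    by_cases h3 : δ = 3
    · subst h3; simp [hmR3]; omega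
    · have hδ : δ ∉ (3:ℕ).divisors := by rw [hdiv]; simp [h1, h3]
      rw [hz δ hδ]; simp [hmR3, h1, h3]
  refine ⟨⟨hmR3, ⟨?_, by decide⟩, huniq⟩, ?_⟩
  · intro δ hδ
    rw [hdiv] at hδ
    simp at hδ
    simp [hmR3, hδ.1, hδ.2]
  · intro r hr
    rw [huniq r hr]
    refine ⟨729, ?_⟩
    rw [hdiv]
    simp [Finset.prod_insert, Finset.mem_insert, hmR3]
    norm_num

private def hmR4 : ℕ → ℤ := fun δ => if δ = 1 then 8 else if δ = 2 then 0 else if δ = 4 then -8 else 0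

private lemma hmAux4 : (∃! r : ℕ → ℤ, HauptmodulExponents 4 r) ∧
    (∀ r : ℕ → ℤ, HauptmodulExponents 4 r →
      ∃ q : ℚ, ∏ δ ∈ (4:ℕ).divisors, (((4:ℕ) : ℚ) / (δ : ℚ)) ^ (r δ) = q ^ 2) := by
  have hdiv : (4:ℕ).divisors = {1, 2, 4} := by decide
  have huniq : ∀ r : ℕ → ℤ, HauptmodulExponents 4 r → r = hmR4 := by
    intro r hr
    obtain ⟨hz, ha, hb, hc, he⟩ := hr
    rw [hdiv] at ha hb hc
    simp [Finset.sum_insert, Finset.mem_insert] at ha hb hc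
    have he2 := he 2 (by decide) (by decide) (by decide)
    rw [hdiv] at he2
    norm_num [Finset.sum_insert, Finset.mem_insert] at he2
    funext δ
    by_cases h1 : δ = 1
    · subst h1; simp [hmR4]; omega
    by_cases h2 : δ = 2
    · subst h2; simp [hmR4]; omega
    by_cases h4 : δ = 4
    · subst h4; simp [hmR4]; omega
    · have hδ : δ ∉ (4:ℕ).divisors := by rw [hdiv]; simp [h1, h2, h4]
      rw [hz δ hδ]; simp [hmR4, h1, h2, h4]
  refine ⟨⟨hmR4, ⟨?_, by decide⟩, huniq⟩, ?_⟩
  · intro δ hδ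
    rw [hdiv] at hδ
    simp at hδ
    simp [hmR4, hδ.1, hδ.2.1, hδ.2.2]
  · intro r hr
    rw [huniq r hr]
    refine ⟨256, ?_⟩
    rw [hdiv]
    simp [Finset.prod_insert, Finset.mem_insert, hmR4]
    norm_num

private def hmR5 : ℕ → ℤ := fun δ => if δ = 1 then 6 else if δ = 5 then -6 else 0

private lemma hmAux5 : (∃! r : ℕ → ℤ, HauptmodulExponents 5 r) ∧
    (∀ r : ℕ → ℤ, HauptmodulExponents 5 r →
      ∃ q : ℚ, ∏ δ ∈ (5:ℕ).divisors, (((5:ℕ) : ℚ) / (δ : ℚ)) ^ (r δ) = q ^ 2) := by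
  have hdiv : (5:ℕ).divisors = {1, 5} := by decide
  have huniq : ∀ r : ℕ → ℤ, HauptmodulExponents 5 r → r = hmR5 := by
    intro r hr
    obtain ⟨hz, ha, hb, hc, he⟩ := hr
    rw [hdiv] at ha hb hc
    simp [Finset.sum_insert, Finset.mem_insert] at ha hb hc
    funext δ
    by_cases h1 : δ = 1
    · subst h1; simp [hmR5]; omega
    by_cases h5 : δ = 5
    · subst h5; simp [hmR5]; omega
    · have hδ : δ ∉ (5:ℕ).divisors := by rw [hdiv]; simp [h1, h5]
      rw [hz δ hδ]; simp [hmR5, h1, h5]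
  refine ⟨⟨hmR5, ⟨?_, by decide⟩, huniq⟩, ?_⟩
  · intro δ hδ
    rw [hdiv] at hδ
    simp at hδ
    simp [hmR5, hδ.1, hδ.2]
  · intro r hr
    rw [huniq r hr]
    refine ⟨125, ?_⟩
    rw [hdiv]
    simp [Finset.prod_insert, Finset.mem_insert, hmR5]
    norm_num

private def hmR6 : ℕ → ℤ := fun δ => if δ = 1 then 5 else if δ = 2 then -1 else if δ = 3 then 1 else if δ = 6 then -5 else 0

private lemma hmAux6 : (∃! r : ℕ → ℤ, HauptmodulExponents 6 r) ∧
    (∀ r : ℕ → ℤ, HauptmodulExponents 6 r →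
      ∃ q : ℚ, ∏ δ ∈ (6:ℕ).divisors, (((6:ℕ) : ℚ) / (δ : ℚ)) ^ (r δ) = q ^ 2) := by
  have hdiv : (6:ℕ).divisors = {1, 2, 3, 6} := by decide
  have huniq : ∀ r : ℕ → ℤ, HauptmodulExponents 6 r → r = hmR6 := by
    intro r hr
    obtain ⟨hz, ha, hb, hc, he⟩ := hr
    rw [hdiv] at ha hb hc
    simp [Finset.sum_insert, Finset.mem_insert] at ha hb hc
    have he2 := he 2 (by decide) (by decide) (by decide)
    have he3 := he 3 (by decide) (by decide) (by decide)
    rw [hdiv] at he2 he3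
    norm_num [Finset.sum_insert, Finset.mem_insert] at he2 he3
    funext δ
    by_cases h1 : δ = 1
    · subst h1; simp [hmR6]; omega
    by_cases h2 : δ = 2
    · subst h2; simp [hmR6]; omega
    by_cases h3 : δ = 3
    · subst h3; simp [hmR6]; omega
    by_cases h6 : δ = 6
    · subst h6; simp [hmR6]; omega
    · have hδ : δ ∉ (6:ℕ).divisors := by rw [hdiv]; simp [h1, h2, h3, h6]
      rw [hz δ hδ]; simp [hmR6, h1, h2, h3, h6]
  refine ⟨⟨hmR6, ⟨?_, by decide⟩, huniq⟩, ?_⟩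
  · intro δ hδ
    rw [hdiv] at hδ
    simp at hδ
    simp [hmR6, hδ.1, hδ.2.1, hδ.2.2.1, hδ.2.2.2]
  · intro r hr
    rw [huniq r hr]
    refine ⟨72, ?_⟩
    rw [hdiv]
    simp [Finset.prod_insert, Finset.mem_insert, hmR6]
    norm_num

private def hmR7 : ℕ → ℤ := fun δ => if δ = 1 then 4 else if δ = 7 then -4 else 0

private lemma hmAux7 : (∃! r : ℕ → ℤ, HauptmodulExponents 7 r) ∧
    (∀ r : ℕ → ℤ, HauptmodulExponents 7 r →
      ∃ q : ℚ, ∏ δ ∈ (7:ℕ).divisors, (((7:ℕ) : ℚ) / (δ : ℚ)) ^ (r δ) = q ^ 2) := by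
  have hdiv : (7:ℕ).divisors = {1, 7} := by decide
  have huniq : ∀ r : ℕ → ℤ, HauptmodulExponents 7 r → r = hmR7 := by
    intro r hr
    obtain ⟨hz, ha, hb, hc, he⟩ := hr
    rw [hdiv] at ha hb hc
    simp [Finset.sum_insert, Finset.mem_insert] at ha hb hc
    funext δ
    by_cases h1 : δ = 1
    · subst h1; simp [hmR7]; omega
    by_cases h7 : δ = 7
    · subst h7; simp [hmR7]; omega
    · have hδ : δ ∉ (7:ℕ).divisors := by rw [hdiv]; simp [h1, h7]
      rw [hz δ hδ]; simp [hmR7, h1, h7]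
  refine ⟨⟨hmR7, ⟨?_, by decide⟩, huniq⟩, ?_⟩
  · intro δ hδ
    rw [hdiv] at hδ
    simp at hδ
    simp [hmR7, hδ.1, hδ.2]
  · intro r hr
    rw [huniq r hr]
    refine ⟨49, ?_⟩
    rw [hdiv]
    simp [Finset.prod_insert, Finset.mem_insert, hmR7]
    norm_num

private def hmR8 : ℕ → ℤ := fun δ => if δ = 1 then 4 else if δ = 2 then -2 else if δ = 4 then 2 else if δ = 8 then -4 else 0

private lemma hmAux8 : (∃! r : ℕ → ℤ, HauptmodulExponents 8 r) ∧
    (∀ r : ℕ → ℤ, HauptmodulExponents 8 r →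
      ∃ q : ℚ, ∏ δ ∈ (8:ℕ).divisors, (((8:ℕ) : ℚ) / (δ : ℚ)) ^ (r δ) = q ^ 2) := by
  have hdiv : (8:ℕ).divisors = {1, 2, 4, 8} := by decide
  have huniq : ∀ r : ℕ → ℤ, HauptmodulExponents 8 r → r = hmR8 := by
    intro r hr
    obtain ⟨hz, ha, hb, hc, he⟩ := hr
    rw [hdiv] at ha hb hc
    simp [Finset.sum_insert, Finset.mem_insert] at ha hb hc
    have he2 := he 2 (by decide) (by decide) (by decide)
    have he4 := he 4 (by decide) (by decide) (by decide)
    rw [hdiv] at he2 he4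
    norm_num [Finset.sum_insert, Finset.mem_insert] at he2 he4
    funext δ
    by_cases h1 : δ = 1
    · subst h1; simp [hmR8]; omega
    by_cases h2 : δ = 2
    · subst h2; simp [hmR8]; omega
    by_cases h4 : δ = 4
    · subst h4; simp [hmR8]; omega
    by_cases h8 : δ = 8
    · subst h8; simp [hmR8]; omega
    · have hδ : δ ∉ (8:ℕ).divisors := by rw [hdiv]; simp [h1, h2, h4, h8]
      rw [hz δ hδ]; simp [hmR8, h1, h2, h4, h8]
  refine ⟨⟨hmR8, ⟨?_, by decide⟩, huniq⟩, ?_⟩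
  · intro δ hδ
    rw [hdiv] at hδ
    simp at hδ
    simp [hmR8, hδ.1, hδ.2.1, hδ.2.2.1, hδ.2.2.2]
  · intro r hr
    rw [huniq r hr]
    refine ⟨32, ?_⟩
    rw [hdiv]
    simp [Finset.prod_insert, Finset.mem_insert, hmR8]
    norm_num

private def hmR9 : ℕ → ℤ := fun δ => if δ = 1 then 3 else if δ = 3 then 0 else if δ = 9 then -3 else 0

private lemma hmAux9 : (∃! r : ℕ → ℤ, HauptmodulExponents 9 r) ∧
    (∀ r : ℕ → ℤ, HauptmodulExponents 9 r →
      ∃ q : ℚ, ∏ δ ∈ (9:ℕ).divisors, (((9:ℕ) : ℚ) / (δ : ℚ)) ^ (r δ) = q ^ 2) := by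
  have hdiv : (9:ℕ).divisors = {1, 3, 9} := by decide
  have huniq : ∀ r : ℕ → ℤ, HauptmodulExponents 9 r → r = hmR9 := by
    intro r hr
    obtain ⟨hz, ha, hb, hc, he⟩ := hr
    rw [hdiv] at ha hb hc
    simp [Finset.sum_insert, Finset.mem_insert] at ha hb hc
    have he3 := he 3 (by decide) (by decide) (by decide)
    rw [hdiv] at he3
    norm_num [Finset.sum_insert, Finset.mem_insert] at he3
    funext δ
    by_cases h1 : δ = 1
    · subst h1; simp [hmR9]; omega
    by_cases h3 : δ = 3
    · subst h3; simp [hmR9]; omega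
    by_cases h9 : δ = 9
    · subst h9; simp [hmR9]; omega
    · have hδ : δ ∉ (9:ℕ).divisors := by rw [hdiv]; simp [h1, h3, h9]
      rw [hz δ hδ]; simp [hmR9, h1, h3, h9]
  refine ⟨⟨hmR9, ⟨?_, by decide⟩, huniq⟩, ?_⟩
  · intro δ hδ
    rw [hdiv] at hδ
    simp at hδ
    simp [hmR9, hδ.1, hδ.2.1, hδ.2.2]
  · intro r hr
    rw [huniq r hr]
    refine ⟨27, ?_⟩
    rw [hdiv]
    simp [Finset.prod_insert, Finset.mem_insert, hmR9]
    norm_num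

private def hmR10 : ℕ → ℤ := fun δ => if δ = 1 then 3 else if δ = 2 then -1 else if δ = 5 then 1 else if δ = 10 then -3 else 0

private lemma hmAux10 : (∃! r : ℕ → ℤ, HauptmodulExponents 10 r) ∧
    (∀ r : ℕ → ℤ, HauptmodulExponents 10 r →
      ∃ q : ℚ, ∏ δ ∈ (10:ℕ).divisors, (((10:ℕ) : ℚ) / (δ : ℚ)) ^ (r δ) = q ^ 2) := by
  have hdiv : (10:ℕ).divisors = {1, 2, 5, 10} := by decide
  have huniq : ∀ r : ℕ → ℤ, HauptmodulExponents 10 r → r = hmR10 := by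
    intro r hr
    obtain ⟨hz, ha, hb, hc, he⟩ := hr
    rw [hdiv] at ha hb hc
    simp [Finset.sum_insert, Finset.mem_insert] at ha hb hc
    have he2 := he 2 (by decide) (by decide) (by decide)
    have he5 := he 5 (by decide) (by decide) (by decide)
    rw [hdiv] at he2 he5
    norm_num [Finset.sum_insert, Finset.mem_insert] at he2 he5
    funext δ
    by_cases h1 : δ = 1
    · subst h1; simp [hmR10]; omega
    by_cases h2 : δ = 2
    · subst h2; simp [hmR10]; omega
    by_cases h5 : δ = 5
    · subst h5; simp [hmR10]; omega
    by_cases h10 : δ = 10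
    · subst h10; simp [hmR10]; omega
    · have hδ : δ ∉ (10:ℕ).divisors := by rw [hdiv]; simp [h1, h2, h5, h10]
      rw [hz δ hδ]; simp [hmR10, h1, h2, h5, h10]
  refine ⟨⟨hmR10, ⟨?_, by decide⟩, huniq⟩, ?_⟩
  · intro δ hδ
    rw [hdiv] at hδ
    simp at hδ
    simp [hmR10, hδ.1, hδ.2.1, hδ.2.2.1, hδ.2.2.2]
  · intro r hr
    rw [huniq r hr]
    refine ⟨20, ?_⟩
    rw [hdiv]
    simp [Finset.prod_insert, Finset.mem_insert, hmR10]
    norm_num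

private def hmR12 : ℕ → ℤ := fun δ => if δ = 1 then 3 else if δ = 2 then -2 else if δ = 3 then -1 else if δ = 4 then 1 else if δ = 6 then 2 else if δ = 12 then -3 else 0

private lemma hmAux12 : (∃! r : ℕ → ℤ, HauptmodulExponents 12 r) ∧
    (∀ r : ℕ → ℤ, HauptmodulExponents 12 r →
      ∃ q : ℚ, ∏ δ ∈ (12:ℕ).divisors, (((12:ℕ) : ℚ) / (δ : ℚ)) ^ (r δ) = q ^ 2) := by
  have hdiv : (12:ℕ).divisors = {1, 2, 3, 4, 6, 12} := by decide
  have huniq : ∀ r : ℕ → ℤ, HauptmodulExponents 12 r → r = hmR12 := by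
    intro r hr
    obtain ⟨hz, ha, hb, hc, he⟩ := hr
    rw [hdiv] at ha hb hc
    simp [Finset.sum_insert, Finset.mem_insert] at ha hb hc
    have he2 := he 2 (by decide) (by decide) (by decide)
    have he3 := he 3 (by decide) (by decide) (by decide)
    have he4 := he 4 (by decide) (by decide) (by decide)
    have he6 := he 6 (by decide) (by decide) (by decide)
    rw [hdiv] at he2 he3 he4 he6
    norm_num [Finset.sum_insert, Finset.mem_insert] at he2 he3 he4 he6
    funext δ
    by_cases h1 : δ = 1
    · subst h1; simp [hmR12]; omega
    by_cases h2 : δ = 2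
    · subst h2; simp [hmR12]; omega
    by_cases h3 : δ = 3
    · subst h3; simp [hmR12]; omega
    by_cases h4 : δ = 4
    · subst h4; simp [hmR12]; omega
    by_cases h6 : δ = 6
    · subst h6; simp [hmR12]; omega
    by_cases h12 : δ = 12
    · subst h12; simp [hmR12]; omega
    · have hδ : δ ∉ (12:ℕ).divisors := by rw [hdiv]; simp [h1, h2, h3, h4, h6, h12]
      rw [hz δ hδ]; simp [hmR12, h1, h2, h3, h4, h6, h12]
  refine ⟨⟨hmR12, ⟨?_, by decide⟩, huniq⟩, ?_⟩
  · intro δ hδ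
    rw [hdiv] at hδ
    simp at hδ
    simp [hmR12, hδ.1, hδ.2.1, hδ.2.2.1, hδ.2.2.2.1, hδ.2.2.2.2.1, hδ.2.2.2.2.2]
  · intro r hr
    rw [huniq r hr]
    refine ⟨12, ?_⟩
    rw [hdiv]
    simp [Finset.prod_insert, Finset.mem_insert, hmR12]
    norm_num

private def hmR13 : ℕ → ℤ := fun δ => if δ = 1 then 2 else if δ = 13 then -2 else 0

private lemma hmAux13 : (∃! r : ℕ → ℤ, HauptmodulExponents 13 r) ∧
    (∀ r : ℕ → ℤ, HauptmodulExponents 13 r →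
      ∃ q : ℚ, ∏ δ ∈ (13:ℕ).divisors, (((13:ℕ) : ℚ) / (δ : ℚ)) ^ (r δ) = q ^ 2) := by
  have hdiv : (13:ℕ).divisors = {1, 13} := by decide
  have huniq : ∀ r : ℕ → ℤ, HauptmodulExponents 13 r → r = hmR13 := by
    intro r hr
    obtain ⟨hz, ha, hb, hc, he⟩ := hr
    rw [hdiv] at ha hb hc
    simp [Finset.sum_insert, Finset.mem_insert] at ha hb hc
    funext δ
    by_cases h1 : δ = 1
    · subst h1; simp [hmR13]; omega
    by_cases h13 : δ = 13
    · subst h13; simp [hmR13]; omega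
    · have hδ : δ ∉ (13:ℕ).divisors := by rw [hdiv]; simp [h1, h13]
      rw [hz δ hδ]; simp [hmR13, h1, h13]
  refine ⟨⟨hmR13, ⟨?_, by decide⟩, huniq⟩, ?_⟩
  · intro δ hδ
    rw [hdiv] at hδ
    simp at hδ
    simp [hmR13, hδ.1, hδ.2]
  · intro r hr
    rw [huniq r hr]
    refine ⟨13, ?_⟩
    rw [hdiv]
    simp [Finset.prod_insert, Finset.mem_insert, hmR13]

private def hmR16 : ℕ → ℤ := fun δ => if δ = 1 then 2 else if δ = 2 then -1 else if δ = 4 then 0 else if δ = 8 then 1 else if δ = 16 then -2 else 0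

private lemma hmAux16 : (∃! r : ℕ → ℤ, HauptmodulExponents 16 r) ∧
    (∀ r : ℕ → ℤ, HauptmodulExponents 16 r →
      ∃ q : ℚ, ∏ δ ∈ (16:ℕ).divisors, (((16:ℕ) : ℚ) / (δ : ℚ)) ^ (r δ) = q ^ 2) := by
  have hdiv : (16:ℕ).divisors = {1, 2, 4, 8, 16} := by decide
  have huniq : ∀ r : ℕ → ℤ, HauptmodulExponents 16 r → r = hmR16 := by
    intro r hr
    obtain ⟨hz, ha, hb, hc, he⟩ := hr
    rw [hdiv] at ha hb hc
    simp [Finset.sum_insert, Finset.mem_insert] at ha hb hc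
    have he2 := he 2 (by decide) (by decide) (by decide)
    have he4 := he 4 (by decide) (by decide) (by decide)
    have he8 := he 8 (by decide) (by decide) (by decide)
    rw [hdiv] at he2 he4 he8
    norm_num [Finset.sum_insert, Finset.mem_insert] at he2 he4 he8
    funext δ
    by_cases h1 : δ = 1
    · subst h1; simp [hmR16]; omega
    by_cases h2 : δ = 2
    · subst h2; simp [hmR16]; omega
    by_cases h4 : δ = 4
    · subst h4; simp [hmR16]; omega
    by_cases h8 : δ = 8
    · subst h8; simp [hmR16]; omega
    by_cases h16 : δ = 16
    · subst h16; simp [hmR16]; omega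
    · have hδ : δ ∉ (16:ℕ).divisors := by rw [hdiv]; simp [h1, h2, h4, h8, h16]
      rw [hz δ hδ]; simp [hmR16, h1, h2, h4, h8, h16]
  refine ⟨⟨hmR16, ⟨?_, by decide⟩, huniq⟩, ?_⟩
  · intro δ hδ
    rw [hdiv] at hδ
    simp at hδ
    simp [hmR16, hδ.1, hδ.2.1, hδ.2.2.1, hδ.2.2.2.1, hδ.2.2.2.2]
  · intro r hr
    rw [huniq r hr]
    refine ⟨8, ?_⟩
    rw [hdiv]
    simp [Finset.prod_insert, Finset.mem_insert, hmR16]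
    norm_num

private def hmR18 : ℕ → ℤ := fun δ => if δ = 1 then 2 else if δ = 2 then -1 else if δ = 3 then -1 else if δ = 6 then 1 else if δ = 9 then 1 else if δ = 18 then -2 else 0

private lemma hmAux18 : (∃! r : ℕ → ℤ, HauptmodulExponents 18 r) ∧
    (∀ r : ℕ → ℤ, HauptmodulExponents 18 r →
      ∃ q : ℚ, ∏ δ ∈ (18:ℕ).divisors, (((18:ℕ) : ℚ) / (δ : ℚ)) ^ (r δ) = q ^ 2) := by
  have hdiv : (18:ℕ).divisors = {1, 2, 3, 6, 9, 18} := by decide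
  have huniq : ∀ r : ℕ → ℤ, HauptmodulExponents 18 r → r = hmR18 := by
    intro r hr
    obtain ⟨hz, ha, hb, hc, he⟩ := hr
    rw [hdiv] at ha hb hc
    simp [Finset.sum_insert, Finset.mem_insert] at ha hb hc
    have he2 := he 2 (by decide) (by decide) (by decide)
    have he3 := he 3 (by decide) (by decide) (by decide)
    have he6 := he 6 (by decide) (by decide) (by decide)
    have he9 := he 9 (by decide) (by decide) (by decide)
    rw [hdiv] at he2 he3 he6 he9
    norm_num [Finset.sum_insert, Finset.mem_insert] at he2 he3 he6 he9
    funext δ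
    by_cases h1 : δ = 1
    · subst h1; simp [hmR18]; omega
    by_cases h2 : δ = 2
    · subst h2; simp [hmR18]; omega
    by_cases h3 : δ = 3
    · subst h3; simp [hmR18]; omega
    by_cases h6 : δ = 6
    · subst h6; simp [hmR18]; omega
    by_cases h9 : δ = 9
    · subst h9; simp [hmR18]; omega
    by_cases h18 : δ = 18
    · subst h18; simp [hmR18]; omega
    · have hδ : δ ∉ (18:ℕ).divisors := by rw [hdiv]; simp [h1, h2, h3, h6, h9, h18]
      rw [hz δ hδ]; simp [hmR18, h1, h2, h3, h6, h9, h18]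
  refine ⟨⟨hmR18, ⟨?_, by decide⟩, huniq⟩, ?_⟩
  · intro δ hδ
    rw [hdiv] at hδ
    simp at hδ
    simp [hmR18, hδ.1, hδ.2.1, hδ.2.2.1, hδ.2.2.2.1, hδ.2.2.2.2.1, hδ.2.2.2.2.2]
  · intro r hr
    rw [huniq r hr]
    refine ⟨6, ?_⟩
    rw [hdiv]
    simp [Finset.prod_insert, Finset.mem_insert, hmR18]
    norm_num

private def hmR25 : ℕ → ℤ := fun δ => if δ = 1 then 1 else if δ = 5 then 0 else if δ = 25 then -1 else 0

private lemma hmAux25 : (∃! r : ℕ → ℤ, HauptmodulExponents 25 r) ∧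
    (∀ r : ℕ → ℤ, HauptmodulExponents 25 r →
      ∃ q : ℚ, ∏ δ ∈ (25:ℕ).divisors, (((25:ℕ) : ℚ) / (δ : ℚ)) ^ (r δ) = q ^ 2) := by
  have hdiv : (25:ℕ).divisors = {1, 5, 25} := by decide
  have huniq : ∀ r : ℕ → ℤ, HauptmodulExponents 25 r → r = hmR25 := by
    intro r hr
    obtain ⟨hz, ha, hb, hc, he⟩ := hr
    rw [hdiv] at ha hb hc
    simp [Finset.sum_insert, Finset.mem_insert] at ha hb hc
    have he5 := he 5 (by decide) (by decide) (by decide)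
    rw [hdiv] at he5
    norm_num [Finset.sum_insert, Finset.mem_insert] at he5
    funext δ
    by_cases h1 : δ = 1
    · subst h1; simp [hmR25]; omega
    by_cases h5 : δ = 5
    · subst h5; simp [hmR25]; omega
    by_cases h25 : δ = 25
    · subst h25; simp [hmR25]; omega
    · have hδ : δ ∉ (25:ℕ).divisors := by rw [hdiv]; simp [h1, h5, h25]
      rw [hz δ hδ]; simp [hmR25, h1, h5, h25]
  refine ⟨⟨hmR25, ⟨?_, by decide⟩, huniq⟩, ?_⟩
  · intro δ hδ
    rw [hdiv] at hδ
    simp at hδ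
    simp [hmR25, hδ.1, hδ.2.1, hδ.2.2]
  · intro r hr
    rw [huniq r hr]
    refine ⟨5, ?_⟩
    rw [hdiv]
    simp [Finset.prod_insert, Finset.mem_insert, hmR25]
    norm_num

/-- For each genus-0 level `N > 1` there is a unique eta-product exponent family
satisfying (a), (b), (c), (e), and it automatically satisfies the Ligozat
square condition (d). -/
theorem hauptmodul_exponents_existsUnique (N : ℕ)
    (hN : N ∈ ({2, 3, 4, 5, 6, 7, 8, 9, 10, 12, 13, 16, 18, 25} : Finset ℕ)) :
    (∃! r : ℕ → ℤ, HauptmodulExponents N r) ∧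
    (∀ r : ℕ → ℤ, HauptmodulExponents N r →
      ∃ q : ℚ, ∏ δ ∈ N.divisors, ((N : ℚ) / (δ : ℚ)) ^ (r δ) = q ^ 2) := by
  fin_cases hN
  · exact hmAux2
  · exact hmAux3
  · exact hmAux4
  · exact hmAux5
  · exact hmAux6
  · exact hmAux7
  · exact hmAux8
  · exact hmAux9
  · exact hmAux10
  · exact hmAux12
  · exact hmAux13
  · exact hmAux16
  · exact hmAux18
  · exact hmAux25
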